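/- Let 0 < α ≤ 1, let Ā : 𝓑 → ℝ be α-Hölder and normalized, and let m be the unique Borel probability measure on 𝓑 fixed by the dual Ruelle operator L_Ā^*. Then for every α-Hölder function ω : 𝓑 → ℝ, the iterates L_Ā^n(ω) converge uniformly on 𝓑, as n → ∞, to the constant function ∫ ω dm. -/

import Mathlib

open MeasureTheory Filter Topology

noncomputable section

instance : Fact (0 < 2 * Real.pi) := ⟨by positivity⟩

/-- The circle `M = ℝ/2πℤ` with arc-length metric. -/
abbrev Circ : Type := AddCircle (2 * Real.pi)

/-- The normalized Haar (Lebesgue) probability measure on the circle. -/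
def haarC : Measure Circ := AddCircle.haarAddCircle

/-- The Bernoulli space `𝓑 = M^ℕ`. -/
abbrev Bs : Type := ℕ → Circ

/-- The left shift `σ`. -/
def shift (x : Bs) : Bs := fun n => x (n + 1)

/-- Prepending a symbol: `cons a x = ax = (a, x₀, x₁, …)`. -/
def cons (a : Circ) (x : Bs) : Bs := fun n =>
  match n with
  | 0 => a
  | k + 1 => x k

/-- The metric `d(x,y) = Σ_k 2^{-k} d_M(x_k, y_k)` on `𝓑`. -/
def dB (x y : Bs) : ℝ := ∑' k : ℕ, (1 / 2 : ℝ) ^ k * dist (x k) (y k)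

/-- `A` is α-Hölder with constant `H` for the metric `dB`. -/
def IsHolderB (α H : ℝ) (A : Bs → ℝ) : Prop := ∀ x y, |A x - A y| ≤ H * dB x y ^ α

/-- The Ruelle operator `L_A ψ (x) = ∫_M e^{A(ax)} ψ(ax) da`. -/
def Ruelle (A : Bs → ℝ) (ψ : Bs → ℝ) : Bs → ℝ :=
  fun x => ∫ a, Real.exp (A (cons a x)) * ψ (cons a x) ∂haarC

/-- `A` is normalized: `∫_M e^{A(ax)} da = 1` for all `x`. -/
def NormalizedB (A : Bs → ℝ) : Prop := ∀ x, ∫ a, Real.exp (A (cons a x)) ∂haarC = 1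

/-- `m` is a fixed point of the dual Ruelle operator `L_A^*`. -/
def FixedDual (A : Bs → ℝ) (m : Measure Bs) : Prop :=
  ∀ ψ : Bs → ℝ, Continuous ψ → (∃ C, ∀ x, |ψ x| ≤ C) →
    ∫ x, Ruelle A ψ x ∂m = ∫ x, ψ x ∂m

set_option maxHeartbeats 1600000

instance : IsProbabilityMeasure haarC := by unfold haarC; infer_instance

lemma haar_closedBall (z : Circ) (η : ℝ) :
    haarC (Metric.closedBall z η) = ENNReal.ofReal (min (2*Real.pi) (2*η)) / ENNReal.ofReal (2*Real.pi) := by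
  have h := AddCircle.volume_closedBall (T := 2*Real.pi) (x := z) η
  rw [AddCircle.volume_eq_smul_haarAddCircle] at h
  rw [Measure.smul_apply, smul_eq_mul] at h
  rw [ENNReal.eq_div_iff (by simp [Real.pi_pos]) (by simp [ENNReal.mul_eq_top])]
  rw [← h]; rfl

lemma haar_closedBall_toReal_pos (z : Circ) (η : ℝ) (hη : 0 < η) :
    0 < (haarC (Metric.closedBall z η)).toReal := by
  rw [haar_closedBall]
  rw [ENNReal.toReal_div]
  apply div_pos <;> rw [ENNReal.toReal_ofReal (by positivity)]
  · exact lt_min (by positivity) (by positivity)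
  · positivity

lemma circ_dist_le (u v : Circ) : dist u v ≤ Real.pi := by
  rw [dist_eq_norm]
  have := AddCircle.norm_le_half_period (p := 2*Real.pi) (x := u - v) (by positivity)
  rwa [abs_of_pos (by positivity), mul_div_cancel_left₀ _ (two_ne_zero)] at this

lemma summable_geom_pi : Summable (fun k : ℕ => (1/2:ℝ)^k * Real.pi) :=
  (summable_geometric_of_lt_one (by norm_num) (by norm_num)).mul_right _

lemma tsum_geom_pi : ∑' k : ℕ, (1/2:ℝ)^k * Real.pi = 2 * Real.pi := by
  rw [tsum_mul_right, tsum_geometric_of_lt_one (by norm_num) (by norm_num)]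
  norm_num [mul_comm]

lemma summable_dB (x y : Bs) : Summable (fun k : ℕ => (1/2:ℝ)^k * dist (x k) (y k)) := by
  apply Summable.of_nonneg_of_le (fun k => by positivity)
    (fun k => mul_le_mul_of_nonneg_left (circ_dist_le _ _) (by positivity)) summable_geom_pi

lemma dB_nonneg (x y : Bs) : 0 ≤ dB x y :=
  tsum_nonneg (fun k => by positivity)

lemma dB_le (x y : Bs) : dB x y ≤ 2 * Real.pi := by
  rw [← tsum_geom_pi]
  exact Summable.tsum_le_tsum (fun k => mul_le_mul_of_nonneg_left (circ_dist_le _ _) (by positivity)) (summable_dB x y) summable_geom_pi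

lemma dB_cons_cons (a : Circ) (x y : Bs) : dB (cons a x) (cons a y) = 1/2 * dB x y := by
  unfold dB
  rw [Summable.tsum_eq_zero_add (summable_dB _ _)]
  simp only [cons, pow_zero, one_mul, dist_self, pow_succ, zero_add]
  rw [← tsum_mul_left]
  congr 1; ext n; ring

lemma dB_cons_left (a b : Circ) (x : Bs) : dB (cons a x) (cons b x) = dist a b := by
  unfold dB
  rw [Summable.tsum_eq_zero_add (summable_dB _ _)]
  simp [cons]

lemma dB_apprx (k : ℕ) (η : ℝ) (y z : Bs) (h : ∀ j < k, dist (y j) (z j) ≤ η) (hη : 0 ≤ η) :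
    dB y z ≤ 2 * η + (1/2:ℝ)^k * (2 * Real.pi) := by
  have hsum2 : Summable (fun j : ℕ => (1/2:ℝ)^(j+k) * Real.pi) :=
    (summable_geom_pi.mul_left ((1/2:ℝ)^k)).congr (fun j => by rw [pow_add]; ring)
  have h1 : ∑ j ∈ Finset.range k, (1/2:ℝ)^j * dist (y j) (z j) ≤ 2 * η := by
    calc ∑ j ∈ Finset.range k, (1/2:ℝ)^j * dist (y j) (z j)
        ≤ ∑ j ∈ Finset.range k, (1/2:ℝ)^j * η :=
          Finset.sum_le_sum (fun j hj =>
            mul_le_mul_of_nonneg_left (h j (Finset.mem_range.mp hj)) (by positivity))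
    _ = (∑ j ∈ Finset.range k, (1/2:ℝ)^j) * η := by rw [Finset.sum_mul]
    _ ≤ 2 * η := by
          apply mul_le_mul_of_nonneg_right _ hη
          have hs := (summable_geometric_of_lt_one (r := (1/2:ℝ)) (by norm_num) (by norm_num))
          calc ∑ j ∈ Finset.range k, (1/2:ℝ)^j ≤ ∑' j : ℕ, (1/2:ℝ)^j :=
                Summable.sum_le_tsum _ (fun j _ => by positivity) hs
          _ = 2 := by rw [tsum_geometric_of_lt_one (by norm_num) (by norm_num)]; norm_num
  have h2 : ∑' j : ℕ, (1/2:ℝ)^(j+k) * dist (y (j+k)) (z (j+k)) ≤ (1/2:ℝ)^k * (2*Real.pi) := by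
    have hle : ∑' j : ℕ, (1/2:ℝ)^(j+k) * dist (y (j+k)) (z (j+k))
        ≤ ∑' j : ℕ, (1/2:ℝ)^(j+k) * Real.pi :=
      Summable.tsum_le_tsum (fun j => mul_le_mul_of_nonneg_left (circ_dist_le _ _) (by positivity))
        ((summable_nat_add_iff k).mpr (summable_dB y z)) hsum2
    refine hle.trans_eq ?_
    have he : ∀ j : ℕ, (1/2:ℝ)^(j+k) * Real.pi = (1/2:ℝ)^k * ((1/2:ℝ)^j * Real.pi) := by
      intro j; rw [pow_add]; ring
    rw [tsum_congr he, tsum_mul_left, tsum_geom_pi]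
  have := Summable.sum_add_tsum_nat_add k (summable_dB y z)
  unfold dB
  rw [← this]
  exact add_le_add h1 h2

lemma cons_continuous (x : Bs) : Continuous (fun a => cons a x) := by
  apply continuous_pi
  intro n
  match n with
  | 0 => exact continuous_id
  | k + 1 => exact continuous_const

lemma holder_continuous {α C : ℝ} (hα0 : 0 < α) (f : Bs → ℝ)
    (hf : ∀ x y, |f x - f y| ≤ C * dB x y ^ α) : Continuous f := by
  rw [continuous_iff_continuousAt]
  intro x
  rw [ContinuousAt, Metric.tendsto_nhds]
  intro ε hε
  set C' := max C 1 with hC'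
  have hC'0 : (0:ℝ) < C' := lt_of_lt_of_le one_pos (le_max_right _ _)
  have hf' : ∀ y, |f y - f x| ≤ C' * dB y x ^ α := fun y =>
    (hf y x).trans (mul_le_mul_of_nonneg_right (le_max_left _ _)
      (Real.rpow_nonneg (dB_nonneg _ _) _))
  set ρ := ((ε/2)/C') ^ (α⁻¹) with hρdef
  have hρ0 : 0 < ρ := Real.rpow_pos_of_pos (by positivity) _
  have hρα : C' * ρ ^ α = ε/2 := by
    rw [hρdef, Real.rpow_inv_rpow (by positivity) hα0.ne']
    field_simp
  -- choose k with (1/2)^k * (2π) ≤ ρ/2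
  obtain ⟨k, hk⟩ := exists_pow_lt_of_lt_one
    (show (0:ℝ) < (ρ/2)/(2*Real.pi) by positivity) (show (1/2:ℝ) < 1 by norm_num)
  have hk' : (1/2:ℝ)^k * (2*Real.pi) ≤ ρ/2 := by
    rw [← le_div_iff₀ (by positivity)]
    exact hk.le
  set η : ℝ := ρ/4 with hηdef
  have hev : ∀ᶠ y in 𝓝 x, ∀ j : Fin k, dist (y (j:ℕ)) (x (j:ℕ)) ≤ η := by
    rw [eventually_all]
    intro j
    have hco : Continuous (fun y : Bs => y (j:ℕ)) := continuous_apply _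
    have : Metric.closedBall (x (j:ℕ)) η ∈ 𝓝 (x (j:ℕ)) :=
      Metric.closedBall_mem_nhds _ (by positivity)
    exact (hco.continuousAt (x := x)).preimage_mem_nhds this
  filter_upwards [hev] with y hy
  have hd : dB y x ≤ ρ := by
    have := dB_apprx k η y x (fun j hj => hy ⟨j, hj⟩) (by positivity)
    calc dB y x ≤ 2*η + (1/2:ℝ)^k*(2*Real.pi) := this
    _ ≤ 2*(ρ/4) + ρ/2 := by rw [hηdef]; linarith
    _ = ρ := by ring
  have : |f y - f x| ≤ C' * ρ ^ α := by
    refine (hf' y).trans (mul_le_mul_of_nonneg_left ?_ hC'0.le)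
    exact Real.rpow_le_rpow (dB_nonneg _ _) hd hα0.le
  rw [Real.dist_eq]
  calc |f y - f x| ≤ C' * ρ ^ α := this
  _ = ε/2 := hρα
  _ < ε := by linarith

-- Constants
def Hp (H : ℝ) : ℝ := max H 0
def Abd (α H : ℝ) (A : Bs → ℝ) : ℝ := |A (fun _ => 0)| + Hp H * (2*Real.pi) ^ α
def kap (α : ℝ) : ℝ := (1/2 : ℝ) ^ α
def Kc (α H : ℝ) (A : Bs → ℝ) : ℝ := Real.exp (Abd α H A) * Hp H * kap α
def del (α H : ℝ) : ℝ := Real.exp (-(Hp H * (2*Real.pi) ^ α))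

lemma Hp_nonneg (H : ℝ) : 0 ≤ Hp H := le_max_right _ _
lemma Hp_holder {α H : ℝ} {A : Bs → ℝ} (hA : IsHolderB α H A) : IsHolderB α (Hp H) A :=
  fun x y => (hA x y).trans (mul_le_mul_of_nonneg_right (le_max_left _ _)
    (Real.rpow_nonneg (dB_nonneg _ _) _))
lemma kap_pos {α : ℝ} : 0 < kap α := Real.rpow_pos_of_pos (by norm_num) _
lemma kap_lt_one {α : ℝ} (hα0 : 0 < α) : kap α < 1 :=
  Real.rpow_lt_one (by norm_num) (by norm_num) hα0
lemma del_pos {α H : ℝ} : 0 < del α H := Real.exp_pos _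
lemma del_le_one {α H : ℝ} (hα0 : 0 < α) : del α H ≤ 1 := by
  apply Real.exp_le_one_iff.mpr
  have : 0 ≤ Hp H * (2*Real.pi) ^ α := by
    have := Hp_nonneg H
    have : (0:ℝ) ≤ (2*Real.pi) ^ α := Real.rpow_nonneg (by positivity) _
    positivity
  linarith

section Ops
variable {α H : ℝ} {A : Bs → ℝ}

lemma A_continuous (hα0 : 0 < α) (hA : IsHolderB α H A) : Continuous A :=
  holder_continuous hα0 A hA

lemma A_abs_le (hα0 : 0 < α) (hA : IsHolderB α H A) (z : Bs) : |A z| ≤ Abd α H A := by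
  have h1 : |A z - A (fun _ => 0)| ≤ Hp H * dB z (fun _ => 0) ^ α := Hp_holder hA z _
  have h2 : Hp H * dB z (fun _ => 0) ^ α ≤ Hp H * (2*Real.pi) ^ α :=
    mul_le_mul_of_nonneg_left
      (Real.rpow_le_rpow (dB_nonneg _ _) (dB_le _ _) hα0.le) (Hp_nonneg H)
  have := abs_sub_abs_le_abs_sub (A z) (A (fun _ => 0))
  unfold Abd; linarith [abs_nonneg (A (fun _ => 0))]

lemma cont_integrable {g : Circ → ℝ} (hg : Continuous g) : Integrable g haarC :=
  hg.integrable_of_hasCompactSupport (HasCompactSupport.of_compactSpace g)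

lemma integrable_exp_mul (hα0 : 0 < α) (hA : IsHolderB α H A) (x : Bs)
    {ψ : Bs → ℝ} (hψ : Continuous ψ) :
    Integrable (fun a => Real.exp (A (cons a x)) * ψ (cons a x)) haarC := by
  apply cont_integrable
  have h1 : Continuous (fun a : Circ => A (cons a x)) :=
    (A_continuous hα0 hA).comp (cons_continuous x)
  exact (Real.continuous_exp.comp h1).mul (hψ.comp (cons_continuous x))

lemma integrable_exp (hα0 : 0 < α) (hA : IsHolderB α H A) (x : Bs) :
    Integrable (fun a => Real.exp (A (cons a x))) haarC := by
  have := integrable_exp_mul hα0 hA x (ψ := fun _ => 1) continuous_const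
  simpa using this

lemma ruelle_le_of_le (hα0 : 0 < α) (hA : IsHolderB α H A) (hnorm : NormalizedB A)
    {ψ : Bs → ℝ} (hψ : Continuous ψ) {b : ℝ} (hb : ∀ y, ψ y ≤ b) (x : Bs) :
    Ruelle A ψ x ≤ b := by
  unfold Ruelle
  calc ∫ a, Real.exp (A (cons a x)) * ψ (cons a x) ∂haarC
      ≤ ∫ a, Real.exp (A (cons a x)) * b ∂haarC := by
        apply integral_mono (integrable_exp_mul hα0 hA x hψ)
          ((integrable_exp hα0 hA x).mul_const b)
        intro a
        exact mul_le_mul_of_nonneg_left (hb _) (Real.exp_pos _).le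
  _ = b := by rw [integral_mul_const, hnorm x, one_mul]

lemma ruelle_ge_of_ge (hα0 : 0 < α) (hA : IsHolderB α H A) (hnorm : NormalizedB A)
    {ψ : Bs → ℝ} (hψ : Continuous ψ) {b : ℝ} (hb : ∀ y, b ≤ ψ y) (x : Bs) :
    b ≤ Ruelle A ψ x := by
  unfold Ruelle
  calc b = ∫ a, Real.exp (A (cons a x)) * b ∂haarC := by
        rw [integral_mul_const, hnorm x, one_mul]
  _ ≤ ∫ a, Real.exp (A (cons a x)) * ψ (cons a x) ∂haarC := by
        apply integral_mono ((integrable_exp hα0 hA x).mul_const b)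
          (integrable_exp_mul hα0 hA x hψ)
        intro a
        exact mul_le_mul_of_nonneg_left (hb _) (Real.exp_pos _).le

lemma ruelle_abs_le (hα0 : 0 < α) (hA : IsHolderB α H A) (hnorm : NormalizedB A)
    {ψ : Bs → ℝ} (hψ : Continuous ψ) {M : ℝ} (hM : ∀ y, |ψ y| ≤ M) (x : Bs) :
    |Ruelle A ψ x| ≤ M := by
  rw [abs_le]
  constructor
  · exact ruelle_ge_of_ge hα0 hA hnorm hψ (fun y => (abs_le.mp (hM y)).1) x
  · exact ruelle_le_of_le hα0 hA hnorm hψ (fun y => (abs_le.mp (hM y)).2) x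

lemma exp_sub_exp_le {s t c : ℝ} (hs : s ≤ c) (ht : t ≤ c) :
    |Real.exp s - Real.exp t| ≤ Real.exp c * |s - t| := by
  wlog h : t ≤ s generalizing s t
  · rw [abs_sub_comm, abs_sub_comm s t]
    exact this ht hs (le_of_not_ge h)
  rw [abs_of_nonneg (sub_nonneg.mpr (Real.exp_le_exp.mpr h)), abs_of_nonneg (sub_nonneg.mpr h)]
  have key : Real.exp s - Real.exp t ≤ Real.exp s * (s - t) := by
    have h1 : Real.exp (t - s) ≥ 1 + (t - s) := by
      have := Real.add_one_le_exp (t - s); linarith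
    have h2 : Real.exp t = Real.exp s * Real.exp (t - s) := by
      rw [← Real.exp_add]; ring_nf
    nlinarith [Real.exp_pos s]
  calc Real.exp s - Real.exp t ≤ Real.exp s * (s - t) := key
  _ ≤ Real.exp c * (s - t) :=
      mul_le_mul_of_nonneg_right (Real.exp_le_exp.mpr hs) (by linarith)

lemma MeasureTheory.abs_integral_le_integral_abs_real {μ : Measure Circ} {f : Circ → ℝ} :
    |∫ a, f a ∂μ| ≤ ∫ a, |f a| ∂μ := by
  simpa [Real.norm_eq_abs] using norm_integral_le_integral_norm (μ := μ) f

lemma exp_A_lower (hα0 : 0 < α) (hA : IsHolderB α H A) (hnorm : NormalizedB A)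
    (x : Bs) (a : Circ) : del α H ≤ Real.exp (A (cons a x)) := by
  have hg : Continuous (fun b : Circ => A (cons b x)) :=
    (A_continuous hα0 hA).comp (cons_continuous x)
  obtain ⟨a₀, -, ha₀⟩ := isCompact_univ.exists_isMaxOn Set.univ_nonempty hg.continuousOn
  simp only [isMaxOn_iff] at ha₀
  have hmax : 0 ≤ A (cons a₀ x) := by
    by_contra hneg
    push_neg at hneg
    have hint : ∫ b, Real.exp (A (cons b x)) ∂haarC ≤ Real.exp (A (cons a₀ x)) := by
      calc ∫ b, Real.exp (A (cons b x)) ∂haarC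
          ≤ ∫ _b, Real.exp (A (cons a₀ x)) ∂haarC :=
            integral_mono (integrable_exp hα0 hA x) (integrable_const _)
              (fun b => Real.exp_le_exp.mpr (ha₀ b trivial))
      _ = Real.exp (A (cons a₀ x)) := by simp
    rw [hnorm x] at hint
    have : Real.exp (A (cons a₀ x)) < 1 := Real.exp_lt_one_iff.mpr hneg
    linarith
  have hdiff : |A (cons a x) - A (cons a₀ x)| ≤ Hp H * (2*Real.pi) ^ α := by
    have h1 := Hp_holder hA (cons a x) (cons a₀ x)
    rw [dB_cons_left] at h1
    refine h1.trans (mul_le_mul_of_nonneg_left ?_ (Hp_nonneg H))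
    apply Real.rpow_le_rpow dist_nonneg ((circ_dist_le _ _).trans (by linarith [Real.pi_pos])) hα0.le
  have : -(Hp H * (2*Real.pi) ^ α) ≤ A (cons a x) := by
    have := abs_le.mp hdiff
    linarith
  exact Real.exp_le_exp.mpr this

-- Lasota-Yorke type estimate
lemma ruelle_holder (hα0 : 0 < α) (hA : IsHolderB α H A) (hnorm : NormalizedB A)
    {ψ : Bs → ℝ} {C M : ℝ} (hC : 0 ≤ C)
    (hψC : ∀ x y, |ψ x - ψ y| ≤ C * dB x y ^ α) (hψM : ∀ y, |ψ y| ≤ M) :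
    ∀ x y, |Ruelle A ψ x - Ruelle A ψ y| ≤
      (kap α * C + Kc α H A * M) * dB x y ^ α := by
  intro x y
  have hψcont : Continuous ψ := holder_continuous hα0 ψ hψC
  have hM : 0 ≤ M := le_trans (abs_nonneg _) (hψM (fun _ => 0))
  have hcont1 : Continuous (fun a : Circ => A (cons a x)) :=
    (A_continuous hα0 hA).comp (cons_continuous x)
  have hcont1y : Continuous (fun a : Circ => A (cons a y)) :=
    (A_continuous hα0 hA).comp (cons_continuous y)
  set d := dB x y with hd
  have hd0 : 0 ≤ d := dB_nonneg x y
  -- two integrands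
  set g1 : Circ → ℝ := fun a => Real.exp (A (cons a x)) * (ψ (cons a x) - ψ (cons a y)) with hg1
  set g2 : Circ → ℝ := fun a => (Real.exp (A (cons a x)) - Real.exp (A (cons a y))) * ψ (cons a y)
    with hg2
  have hg1i : Integrable g1 haarC := by
    apply cont_integrable
    exact (Real.continuous_exp.comp hcont1).mul
      ((hψcont.comp (cons_continuous x)).sub (hψcont.comp (cons_continuous y)))
  have hg2i : Integrable g2 haarC := by
    apply cont_integrable
    exact ((Real.continuous_exp.comp hcont1).sub (Real.continuous_exp.comp hcont1y)).mul
      (hψcont.comp (cons_continuous y))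
  have hsplit : Ruelle A ψ x - Ruelle A ψ y = (∫ a, g1 a ∂haarC) + ∫ a, g2 a ∂haarC := by
    rw [← integral_add hg1i hg2i]
    unfold Ruelle
    rw [← integral_sub (integrable_exp_mul hα0 hA x hψcont) (integrable_exp_mul hα0 hA y hψcont)]
    congr 1; ext a; simp only [g1, g2]; ring
  -- bound g1 integral
  have hb1 : |∫ a, g1 a ∂haarC| ≤ kap α * C * d ^ α := by
    have hpt : ∀ a, |g1 a| ≤ Real.exp (A (cons a x)) * (C * (kap α * d ^ α)) := by
      intro a
      rw [hg1, abs_mul, abs_of_pos (Real.exp_pos _)]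
      apply mul_le_mul_of_nonneg_left _ (Real.exp_pos _).le
      have := hψC (cons a x) (cons a y)
      rw [dB_cons_cons] at this
      refine this.trans ?_
      apply mul_le_mul_of_nonneg_left _ hC
      rw [Real.mul_rpow (by norm_num) hd0]
      exact le_of_eq rfl
    calc |∫ a, g1 a ∂haarC| ≤ ∫ a, |g1 a| ∂haarC := MeasureTheory.abs_integral_le_integral_abs_real
    _ ≤ ∫ a, Real.exp (A (cons a x)) * (C * (kap α * d ^ α)) ∂haarC := by
        apply integral_mono hg1i.abs ((integrable_exp hα0 hA x).mul_const _) hpt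
    _ = C * (kap α * d ^ α) := by rw [integral_mul_const, hnorm x, one_mul]
    _ = kap α * C * d ^ α := by ring
  -- bound g2 integral
  have hb2 : |∫ a, g2 a ∂haarC| ≤ Kc α H A * M * d ^ α := by
    have hpt : ∀ a, |g2 a| ≤ Real.exp (Abd α H A) * (Hp H * (kap α * d ^ α)) * M := by
      intro a
      rw [hg2, abs_mul]
      have h1 : |Real.exp (A (cons a x)) - Real.exp (A (cons a y))| ≤
          Real.exp (Abd α H A) * (Hp H * (kap α * d ^ α)) := by
        have hexp := exp_sub_exp_le (c := Abd α H A)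
          (abs_le.mp (A_abs_le hα0 hA (cons a x))).2 (abs_le.mp (A_abs_le hα0 hA (cons a y))).2
        refine hexp.trans ?_
        apply mul_le_mul_of_nonneg_left _ (Real.exp_pos _).le
        have := Hp_holder hA (cons a x) (cons a y)
        rw [dB_cons_cons] at this
        refine this.trans ?_
        apply mul_le_mul_of_nonneg_left _ (Hp_nonneg H)
        rw [Real.mul_rpow (by norm_num) hd0]
        exact le_of_eq rfl
      have hnn : (0:ℝ) ≤ Real.exp (Abd α H A) * (Hp H * (kap α * d ^ α)) := by
        have h3 : (0:ℝ) ≤ kap α := kap_pos.le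
        have h4 : (0:ℝ) ≤ d ^ α := Real.rpow_nonneg hd0 _
        have := Hp_nonneg H
        positivity
      exact mul_le_mul h1 (hψM _) (abs_nonneg _) hnn
    calc |∫ a, g2 a ∂haarC| ≤ ∫ a, |g2 a| ∂haarC := MeasureTheory.abs_integral_le_integral_abs_real
    _ ≤ ∫ _a, Real.exp (Abd α H A) * (Hp H * (kap α * d ^ α)) * M ∂haarC :=
        integral_mono hg2i.abs (integrable_const _) hpt
    _ = Real.exp (Abd α H A) * (Hp H * (kap α * d ^ α)) * M := by simp
    _ = Kc α H A * M * d ^ α := by unfold Kc; ring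
  calc |Ruelle A ψ x - Ruelle A ψ y| ≤ |∫ a, g1 a ∂haarC| + |∫ a, g2 a ∂haarC| := by
        rw [hsplit]; exact abs_add_le _ _
  _ ≤ kap α * C * d ^ α + Kc α H A * M * d ^ α := add_le_add hb1 hb2
  _ = (kap α * C + Kc α H A * M) * d ^ α := by ring

lemma ruelle_const_sub (hα0 : 0 < α) (hA : IsHolderB α H A) (hnorm : NormalizedB A)
    {ψ : Bs → ℝ} (hψ : Continuous ψ) (c : ℝ) (x : Bs) :
    Ruelle A (fun y => c - ψ y) x = c - Ruelle A ψ x := by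
  unfold Ruelle
  have h1 : (fun a => Real.exp (A (cons a x)) * ((fun y => c - ψ y) (cons a x)))
      = fun a => Real.exp (A (cons a x)) * c - Real.exp (A (cons a x)) * ψ (cons a x) := by
    ext a; ring
  rw [h1, integral_sub ((integrable_exp hα0 hA x).mul_const c)
    (integrable_exp_mul hα0 hA x hψ), integral_mul_const, hnorm x, one_mul]

lemma ruelle_smul (hα0 : 0 < α) (hA : IsHolderB α H A)
    {ψ : Bs → ℝ} (r : ℝ) (x : Bs) :
    Ruelle A (fun y => r * ψ y) x = r * Ruelle A ψ x := by
  unfold Ruelle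
  have h1 : (fun a => Real.exp (A (cons a x)) * ((fun y => r * ψ y) (cons a x)))
      = fun a => r * (Real.exp (A (cons a x)) * ψ (cons a x)) := by
    ext a; ring
  rw [h1, integral_const_mul]

def NiceF (α : ℝ) (ψ : Bs → ℝ) : Prop :=
  (∃ C, 0 ≤ C ∧ ∀ x y, |ψ x - ψ y| ≤ C * dB x y ^ α) ∧ (∃ M, ∀ x, |ψ x| ≤ M)

lemma NiceF.continuous (hα0 : 0 < α) {ψ : Bs → ℝ} (h : NiceF α ψ) : Continuous ψ := by
  obtain ⟨⟨C, _, hC⟩, _⟩ := h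
  exact holder_continuous hα0 ψ hC

lemma nice_ruelle (hα0 : 0 < α) (hA : IsHolderB α H A) (hnorm : NormalizedB A)
    {ψ : Bs → ℝ} (h : NiceF α ψ) : NiceF α (Ruelle A ψ) := by
  obtain ⟨⟨C, hC0, hC⟩, ⟨M, hM⟩⟩ := h
  have hψcont : Continuous ψ := holder_continuous hα0 ψ hC
  have hM0 : 0 ≤ M := le_trans (abs_nonneg _) (hM (fun _ => 0))
  refine ⟨⟨kap α * C + Kc α H A * M, ?_, ruelle_holder hα0 hA hnorm hC0 hC hM⟩,
    ⟨M, fun x => ruelle_abs_le hα0 hA hnorm hψcont hM x⟩⟩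
  have h1 : 0 ≤ Kc α H A := by
    unfold Kc
    have := Hp_nonneg H
    have := kap_pos (α := α)
    positivity
  have := kap_pos (α := α)
  positivity

lemma nice_iter (hα0 : 0 < α) (hA : IsHolderB α H A) (hnorm : NormalizedB A)
    {ψ : Bs → ℝ} (h : NiceF α ψ) (n : ℕ) : NiceF α ((Ruelle A)^[n] ψ) := by
  induction n with
  | zero => exact h
  | succ k ih => rw [Function.iterate_succ_apply']; exact nice_ruelle hα0 hA hnorm ih

lemma iter_nonneg (hα0 : 0 < α) (hA : IsHolderB α H A) (hnorm : NormalizedB A)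
    {ψ : Bs → ℝ} (h : NiceF α ψ) (h0 : ∀ y, 0 ≤ ψ y) (n : ℕ) :
    ∀ x, 0 ≤ (Ruelle A)^[n] ψ x := by
  induction n with
  | zero => exact h0
  | succ k ih =>
      intro x
      rw [Function.iterate_succ_apply']
      exact ruelle_ge_of_ge hα0 hA hnorm ((nice_iter hα0 hA hnorm h k).continuous hα0) ih x

lemma iter_const_sub (hα0 : 0 < α) (hA : IsHolderB α H A) (hnorm : NormalizedB A)
    {ψ : Bs → ℝ} (h : NiceF α ψ) (c : ℝ) (n : ℕ) :
    (Ruelle A)^[n] (fun y => c - ψ y) = fun x => c - (Ruelle A)^[n] ψ x := by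
  induction n with
  | zero => rfl
  | succ k ih =>
      rw [Function.iterate_succ_apply', ih, Function.iterate_succ_apply']
      funext x
      exact ruelle_const_sub hα0 hA hnorm ((nice_iter hα0 hA hnorm h k).continuous hα0) c x

lemma iter_smul (hα0 : 0 < α) (hA : IsHolderB α H A) (hnorm : NormalizedB A)
    {ψ : Bs → ℝ} (h : NiceF α ψ) (r : ℝ) (n : ℕ) :
    (Ruelle A)^[n] (fun y => r * ψ y) = fun x => r * (Ruelle A)^[n] ψ x := by
  induction n with
  | zero => rfl
  | succ k ih =>
      rw [Function.iterate_succ_apply', ih, Function.iterate_succ_apply']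
      funext x
      exact ruelle_smul hα0 hA (r := r) x

lemma shift_cons (a : Circ) (x : Bs) : shift (cons a x) = x := by
  funext n; rfl

lemma iterate_shift_zero (j : ℕ) (y : Bs) : (shift^[j] y) 0 = y j := by
  induction j generalizing y with
  | zero => rfl
  | succ i ihj =>
      rw [Function.iterate_succ_apply, ihj (shift y)]
      rfl

def qball (η : ℝ) : ℝ := min (2*Real.pi) (2*η) / (2*Real.pi)


lemma haar_closedBall_toReal (z : Circ) (η : ℝ) (hη : 0 < η) :
    (haarC (Metric.closedBall z η)).toReal = qball η := by
  rw [haar_closedBall, ENNReal.toReal_div,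
    ENNReal.toReal_ofReal (le_min (by positivity) (by positivity)),
    ENNReal.toReal_ofReal (by positivity : (0:ℝ) ≤ 2*Real.pi)]
  rfl

lemma qball_pos {η : ℝ} (hη : 0 < η) : 0 < qball η := by
  unfold qball
  apply div_pos (lt_min (by positivity) (by positivity)) (by positivity)

lemma qball_le_one {η : ℝ} : qball η ≤ 1 := by
  unfold qball
  rw [div_le_one (by positivity)]
  exact min_le_left _ _

lemma doeblin (hα0 : 0 < α) (hA : IsHolderB α H A) (hnorm : NormalizedB A)
    {η : ℝ} (hη : 0 < η) (z : ℕ → Circ) :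
    ∀ (k : ℕ) (x : Bs) (φ : Bs → ℝ), NiceF α φ → (∀ y, 0 ≤ φ y) →
    (∀ y, shift^[k] y = x → (∀ j < k, dist (y j) (z j) ≤ η) → 1 ≤ φ y) →
    (del α H * qball η)^k ≤ (Ruelle A)^[k] φ x := by
  intro k
  induction k with
  | zero =>
      intro x φ hnice h0 h1
      simpa using h1 x rfl (by omega)
  | succ k ih =>
      intro x φ hnice h0 h1
      rw [Function.iterate_succ_apply']
      set F := (Ruelle A)^[k] φ with hF
      have hFnice : NiceF α F := nice_iter hα0 hA hnorm hnice k
      have hFcont : Continuous F := hFnice.continuous hα0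
      have hF0 : ∀ y, 0 ≤ F y := iter_nonneg hα0 hA hnorm hnice h0 k
      set S : Set Circ := Metric.closedBall (z k) η with hS
      set p : ℝ := (del α H * qball η)^k with hp
      have hp0 : 0 < p := by
        apply pow_pos (mul_pos del_pos (qball_pos hη))
      -- lower bound on F (cons a x) for a ∈ S
      have hFlow : ∀ a ∈ S, p ≤ F (cons a x) := by
        intro a ha
        apply ih (cons a x) φ hnice h0
        intro y hy hcoords
        apply h1 y
        · rw [Function.iterate_succ_apply', hy, shift_cons]
        · intro j hj
          rcases Nat.lt_succ_iff_lt_or_eq.mp hj with hjk | hjk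
          · exact hcoords j hjk
          · subst hjk
            have h5 : y j = a := by
              rw [← iterate_shift_zero j y, hy]
              rfl
            rw [h5]
            exact Metric.mem_closedBall.mp ha
      -- integral lower bound
      have hfint : Integrable (fun a => Real.exp (A (cons a x)) * F (cons a x)) haarC :=
        integrable_exp_mul hα0 hA x hFcont
      have hfnn : ∀ a, 0 ≤ Real.exp (A (cons a x)) * F (cons a x) := fun a =>
        mul_nonneg (Real.exp_pos _).le (hF0 _)
      have h2 : ∫ a in S, Real.exp (A (cons a x)) * F (cons a x) ∂haarC
          ≤ Ruelle A F x :=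
        setIntegral_le_integral hfint (Filter.Eventually.of_forall hfnn)
      have h3 : (del α H * p) * (haarC S).toReal
          ≤ ∫ a in S, Real.exp (A (cons a x)) * F (cons a x) ∂haarC := by
        rw [show (del α H * p) * (haarC S).toReal = haarC.real S • (del α H * p) by
          rw [smul_eq_mul, mul_comm]; rfl]
        apply setIntegral_ge_of_const_le measurableSet_closedBall
          (measure_ne_top haarC S)
        · intro a ha
          have := exp_A_lower hα0 hA hnorm x a
          exact mul_le_mul this (hFlow a ha) hp0.le (Real.exp_pos _).le
        · exact hfint.integrableOn
      have h4 : (haarC S).toReal = qball η := haar_closedBall_toReal _ _ hη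
      have : (del α H * qball η)^(k+1) = (del α H * p) * qball η := by
        rw [hp]; ring
      rw [this, ← h4]
      exact h3.trans h2


lemma iter_le_of_le (hα0 : 0 < α) (hA : IsHolderB α H A) (hnorm : NormalizedB A)
    {ψ : Bs → ℝ} (h : NiceF α ψ) {s : ℝ} (hs : ∀ y, ψ y ≤ s) (k : ℕ) :
    ∀ x, (Ruelle A)^[k] ψ x ≤ s := by
  induction k with
  | zero => exact hs
  | succ j ih =>
      intro x
      rw [Function.iterate_succ_apply']
      exact ruelle_le_of_le hα0 hA hnorm ((nice_iter hα0 hA hnorm h j).continuous hα0) ih x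

lemma key_step (hα0 : 0 < α) (hA : IsHolderB α H A) (hnorm : NormalizedB A)
    {ψ : Bs → ℝ} {C : ℝ} (hC : 0 ≤ C) (hψC : ∀ x y, |ψ x - ψ y| ≤ C * dB x y ^ α)
    {M : ℝ} (hψM : ∀ y, |ψ y| ≤ M)
    {s : ℝ} (hs : ∀ y, ψ y ≤ s)
    (k : ℕ) {η : ℝ} (hη : 0 < η) (x z : Bs) :
    (Ruelle A)^[k] ψ x ≤ s - (del α H * qball η)^k *
      (s - ψ z - C * (2*η + (1/2:ℝ)^k * (2*Real.pi)) ^ α) := by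
  have hψnice : NiceF α ψ := ⟨⟨C, hC, hψC⟩, ⟨M, hψM⟩⟩
  set p : ℝ := (del α H * qball η)^k with hpdef
  have hp0 : 0 < p := pow_pos (mul_pos del_pos (qball_pos hη)) k
  set ρ : ℝ := 2*η + (1/2:ℝ)^k * (2*Real.pi) with hρdef
  have hρ0 : 0 < ρ := by positivity
  set γ : ℝ := s - ψ z - C * ρ ^ α with hγdef
  by_cases hγ : γ ≤ 0
  · have h1 : (Ruelle A)^[k] ψ x ≤ s := iter_le_of_le hα0 hA hnorm hψnice hs k x
    nlinarith [mul_nonpos_of_nonneg_of_nonpos hp0.le hγ]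
  push_neg at hγ
  set φ : Bs → ℝ := fun y => γ⁻¹ * (s - ψ y) with hφdef
  have hφnice : NiceF α φ := by
    constructor
    · refine ⟨γ⁻¹ * C, by positivity, ?_⟩
      intro u v
      have : φ u - φ v = γ⁻¹ * (ψ v - ψ u) := by rw [hφdef]; ring
      rw [this, abs_mul, abs_of_pos (by positivity : (0:ℝ) < γ⁻¹), mul_assoc]
      exact mul_le_mul_of_nonneg_left (by rw [abs_sub_comm]; exact hψC u v) (by positivity)
    · refine ⟨γ⁻¹ * (|s| + M), ?_⟩
      intro y
      rw [hφdef, abs_mul, abs_of_pos (by positivity : (0:ℝ) < γ⁻¹)]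
      apply mul_le_mul_of_nonneg_left _ (by positivity)
      calc |s - ψ y| ≤ |s| + |ψ y| := abs_sub _ _
      _ ≤ |s| + M := by linarith [hψM y]
  have hφ0 : ∀ y, 0 ≤ φ y := fun y =>
    mul_nonneg (by positivity) (sub_nonneg.mpr (hs y))
  have hφ1 : ∀ y, shift^[k] y = x → (∀ j < k, dist (y j) (z j) ≤ η) → 1 ≤ φ y := by
    intro y _ hcoords
    have hdyz : dB y z ≤ ρ := dB_apprx k η y z hcoords hη.le
    have h2 : ψ y - ψ z ≤ C * ρ ^ α := by
      have := (abs_le.mp (hψC y z)).2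
      have h3 : C * dB y z ^ α ≤ C * ρ ^ α :=
        mul_le_mul_of_nonneg_left (Real.rpow_le_rpow (dB_nonneg _ _) hdyz hα0.le) hC
      linarith
    have h4 : γ ≤ s - ψ y := by rw [hγdef]; linarith
    rw [hφdef]
    calc (1:ℝ) = γ⁻¹ * γ := by field_simp
    _ ≤ γ⁻¹ * (s - ψ y) := mul_le_mul_of_nonneg_left h4 (by positivity)
  have hdoe := doeblin hα0 hA hnorm hη z k x φ hφnice hφ0 hφ1
  -- identify the iterate of φ
  have hnice2 : NiceF α (fun y => s - ψ y) := by
    constructor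
    · refine ⟨C, hC, ?_⟩
      intro u v
      have : (s - ψ u) - (s - ψ v) = ψ v - ψ u := by ring
      rw [this, abs_sub_comm]
      exact hψC u v
    · exact ⟨|s| + M, fun y => (abs_sub _ _).trans (by linarith [hψM y])⟩
  have hiter : (Ruelle A)^[k] φ x = γ⁻¹ * (s - (Ruelle A)^[k] ψ x) := by
    have e1 : φ = fun y => γ⁻¹ * ((fun w => s - ψ w) y) := rfl
    rw [e1, iter_smul hα0 hA hnorm hnice2 γ⁻¹ k,
      iter_const_sub hα0 hA hnorm hψnice s k]
  rw [hiter] at hdoe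
  have : p * γ ≤ s - (Ruelle A)^[k] ψ x := by
    have := mul_le_mul_of_nonneg_left hdoe hγ.le
    calc p * γ = γ * p := by ring
    _ ≤ γ * (γ⁻¹ * (s - (Ruelle A)^[k] ψ x)) := this
    _ = s - (Ruelle A)^[k] ψ x := by field_simp
  linarith

end Ops

/-- for a normalized α-Hölder potential, the iterates `L_Ā^n ω` of any
α-Hölder function `ω` converge uniformly to the constant `∫ ω dm`. -/
theorem iterates_tendsto_uniformly (α H : ℝ) (hα0 : 0 < α) (hα1 : α ≤ 1)
    (A : Bs → ℝ) (hA : IsHolderB α H A) (hnorm : NormalizedB A)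
    (m : Measure Bs) (hm : IsProbabilityMeasure m) (hfix : FixedDual A m)
    (hmuniq : ∀ m' : Measure Bs, IsProbabilityMeasure m' → FixedDual A m' → m' = m)
    (ω : Bs → ℝ) (Cω : ℝ) (hω : IsHolderB α Cω ω) :
    TendstoUniformly (fun n x => (Ruelle A)^[n] ω x) (fun _ => ∫ x, ω x ∂m) atTop := by
  classical
  set L := Ruelle A with hL
  -- constants
  set Cw : ℝ := max Cω 0 with hCwdef
  have hCw0 : 0 ≤ Cw := le_max_right _ _
  have hωC : ∀ x y, |ω x - ω y| ≤ Cw * dB x y ^ α := fun x y =>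
    (hω x y).trans (mul_le_mul_of_nonneg_right (le_max_left _ _)
      (Real.rpow_nonneg (dB_nonneg _ _) _))
  set x₀ : Bs := fun _ => 0 with hx₀
  set M₀ : ℝ := |ω x₀| + Cw * (2*Real.pi) ^ α with hM₀def
  have h2pi : (0:ℝ) ≤ (2*Real.pi) ^ α := Real.rpow_nonneg (by positivity) _
  have hM₀ : ∀ x, |ω x| ≤ M₀ := by
    intro x
    have h1 := hωC x x₀
    have h2 : Cw * dB x x₀ ^ α ≤ Cw * (2*Real.pi) ^ α :=
      mul_le_mul_of_nonneg_left
        (Real.rpow_le_rpow (dB_nonneg _ _) (dB_le _ _) hα0.le) hCw0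
    have := abs_sub_abs_le_abs_sub (ω x) (ω x₀)
    rw [hM₀def]; linarith
  have hM₀0 : 0 ≤ M₀ := le_trans (abs_nonneg _) (hM₀ x₀)
  set κ : ℝ := kap α with hκdef
  have hκ0 : 0 < κ := kap_pos
  have hκ1 : κ < 1 := kap_lt_one hα0
  set Kv : ℝ := Kc α H A with hKvdef
  have hKv0 : 0 ≤ Kv := by
    rw [hKvdef]; unfold Kc
    have := Hp_nonneg H
    have := kap_pos (α := α)
    positivity
  set Cs : ℝ := Cw + Kv * M₀ / (1 - κ) with hCsdef
  have hCs0 : 0 ≤ Cs := by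
    rw [hCsdef]
    have h1κ : (0:ℝ) < 1 - κ := by linarith
    have : 0 ≤ Kv * M₀ / (1 - κ) := by positivity
    linarith
  -- regularity of iterates
  have reg : ∀ n, (∀ x, |L^[n] ω x| ≤ M₀) ∧
      (∀ x y, |L^[n] ω x - L^[n] ω y| ≤ Cs * dB x y ^ α) := by
    intro n
    induction n with
    | zero =>
        refine ⟨hM₀, fun x y => (hωC x y).trans ?_⟩
        apply mul_le_mul_of_nonneg_right _ (Real.rpow_nonneg (dB_nonneg _ _) _)
        rw [hCsdef]
        have h1κ : (0:ℝ) < 1 - κ := by linarith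
        have : 0 ≤ Kv * M₀ / (1 - κ) := by positivity
        linarith
    | succ n ih =>
        have hcont : Continuous (L^[n] ω) := holder_continuous hα0 _ ih.2
        constructor
        · intro x
          rw [Function.iterate_succ_apply']
          exact ruelle_abs_le hα0 hA hnorm hcont ih.1 x
        · intro x y
          rw [Function.iterate_succ_apply']
          refine (ruelle_holder hα0 hA hnorm hCs0 ih.2 ih.1 x y).trans ?_
          apply mul_le_mul_of_nonneg_right _ (Real.rpow_nonneg (dB_nonneg _ _) _)
          rw [← hκdef, ← hKvdef]
          have hne' : (1:ℝ) - κ ≠ 0 := by linarith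
          have ht : (1-κ) * (Kv*M₀/(1-κ)) = Kv*M₀ := by
            rw [mul_comm, div_mul_cancel₀ _ hne']
          rw [hCsdef]
          nlinarith [mul_nonneg hKv0 hM₀0]
  have contn : ∀ n, Continuous (L^[n] ω) := fun n => holder_continuous hα0 _ (reg n).2
  -- sup and inf sequences
  have hne : ∀ n, (Set.range (L^[n] ω)).Nonempty := fun n => ⟨_, ⟨x₀, rfl⟩⟩
  have hbddA : ∀ n, BddAbove (Set.range (L^[n] ω)) := by
    intro n
    refine ⟨M₀, ?_⟩
    rintro v ⟨x, rfl⟩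
    exact (abs_le.mp ((reg n).1 x)).2
  have hbddB : ∀ n, BddBelow (Set.range (L^[n] ω)) := by
    intro n
    refine ⟨-M₀, ?_⟩
    rintro v ⟨x, rfl⟩
    exact (abs_le.mp ((reg n).1 x)).1
  set b : ℕ → ℝ := fun n => sSup (Set.range (L^[n] ω)) with hbdef
  set a : ℕ → ℝ := fun n => sInf (Set.range (L^[n] ω)) with hadef
  have hle_b : ∀ n x, L^[n] ω x ≤ b n := fun n x => le_csSup (hbddA n) ⟨x, rfl⟩
  have ha_le : ∀ n x, a n ≤ L^[n] ω x := fun n x => csInf_le (hbddB n) ⟨x, rfl⟩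
  have hb_succ : ∀ n, b (n+1) ≤ b n := by
    intro n
    apply csSup_le (hne (n+1))
    rintro v ⟨x, rfl⟩
    rw [Function.iterate_succ_apply']
    exact ruelle_le_of_le hα0 hA hnorm (contn n) (hle_b n) x
  have ha_succ : ∀ n, a n ≤ a (n+1) := by
    intro n
    apply le_csInf (hne (n+1))
    rintro v ⟨x, rfl⟩
    rw [Function.iterate_succ_apply']
    exact ruelle_ge_of_ge hα0 hA hnorm (contn n) (ha_le n) x
  have ha_mono : Monotone a := monotone_nat_of_le_succ ha_succ
  have hb_anti : Antitone b := antitone_nat_of_succ_le hb_succ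
  set Δ : ℕ → ℝ := fun n => b n - a n with hΔdef
  have hΔ0 : ∀ n, 0 ≤ Δ n := fun n => sub_nonneg.mpr ((ha_le n x₀).trans (hle_b n x₀))
  have hΔanti : Antitone Δ := fun i j hij => by
    simp only [hΔdef]
    have := hb_anti hij
    have := ha_mono hij
    linarith
  -- the key inequality
  have key : ∀ (k : ℕ) (η : ℝ), 0 < η → ∀ n,
      Δ (n + k) ≤ (1 - (del α H * qball η)^k) * Δ n +
        (del α H * qball η)^k * (Cs * (2*η + (1/2:ℝ)^k * (2*Real.pi)) ^ α) := by
    intro k η hη n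
    set p : ℝ := (del α H * qball η)^k with hpdef
    have hp0 : 0 < p := pow_pos (mul_pos del_pos (qball_pos hη)) k
    set ρα : ℝ := (2*η + (1/2:ℝ)^k * (2*Real.pi)) ^ α with hραdef
    have hiter : ∀ x, L^[n + k] ω x = (Ruelle A)^[k] (L^[n] ω) x := by
      intro x
      rw [hL, add_comm n k, Function.iterate_add_apply]
    have hks : ∀ x z, L^[n+k] ω x ≤ b n - p * (b n - L^[n] ω z - Cs * ρα) := by
      intro x z
      rw [hiter x]
      exact key_step hα0 hA hnorm hCs0 (reg n).2 (reg n).1 (hle_b n) k hη x z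
    have hbnk : ∀ z : Bs, b (n+k) ≤ b n - p * (b n - L^[n] ω z - Cs * ρα) := by
      intro z
      apply csSup_le (hne (n+k))
      rintro v ⟨x, rfl⟩
      exact hks x z
    have hinf : (b (n+k) - b n + p * b n - p * (Cs * ρα)) / p ≤ a n := by
      apply le_csInf (hne n)
      rintro v ⟨z, rfl⟩
      rw [div_le_iff₀ hp0]
      have := hbnk z
      nlinarith
    rw [div_le_iff₀ hp0] at hinf
    have han : a n ≤ a (n+k) := ha_mono (Nat.le_add_right n k)
    simp only [hΔdef]
    nlinarith
  -- passing to the limit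
  have hbddΔ : BddBelow (Set.range Δ) := by
    refine ⟨0, ?_⟩
    rintro v ⟨n, rfl⟩
    exact hΔ0 n
  set Lv : ℝ := ⨅ n, Δ n with hLvdef
  have hΔtend : Tendsto Δ atTop (𝓝 Lv) := tendsto_atTop_ciInf hΔanti hbddΔ
  have hLv0 : 0 ≤ Lv := le_ciInf hΔ0
  have hLvle : ∀ (k : ℕ) (η : ℝ), 0 < η →
      Lv ≤ Cs * (2*η + (1/2:ℝ)^k * (2*Real.pi)) ^ α := by
    intro k η hη
    set p : ℝ := (del α H * qball η)^k with hpdef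
    have hp0 : 0 < p := pow_pos (mul_pos del_pos (qball_pos hη)) k
    set E : ℝ := Cs * (2*η + (1/2:ℝ)^k * (2*Real.pi)) ^ α with hEdef
    have h1 : Tendsto (fun n => Δ (n + k)) atTop (𝓝 Lv) :=
      hΔtend.comp (tendsto_add_atTop_nat k)
    have h2 : Tendsto (fun n => (1 - p) * Δ n + p * E) atTop (𝓝 ((1 - p) * Lv + p * E)) :=
      ((hΔtend.const_mul (1 - p)).add tendsto_const_nhds)
    have h3 : Lv ≤ (1 - p) * Lv + p * E :=
      le_of_tendsto_of_tendsto' h1 h2 (fun n => key k η hη n)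
    nlinarith
  have hLv_eq : Lv = 0 := by
    by_contra hne0
    have hLvpos : 0 < Lv := lt_of_le_of_ne hLv0 (Ne.symm hne0)
    set Cs1 : ℝ := Cs + 1 with hCs1
    have hCs1p : 0 < Cs1 := by linarith
    set ρ₀ : ℝ := (Lv / (2 * Cs1)) ^ (α⁻¹) with hρ₀def
    have hρ₀0 : 0 < ρ₀ := Real.rpow_pos_of_pos (by positivity) _
    have hρ₀α : Cs1 * ρ₀ ^ α = Lv / 2 := by
      rw [hρ₀def, Real.rpow_inv_rpow (by positivity) hα0.ne']
      field_simp
    obtain ⟨k, hk⟩ := exists_pow_lt_of_lt_one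
      (show (0:ℝ) < (ρ₀/2)/(2*Real.pi) by positivity) (show (1/2:ℝ) < 1 by norm_num)
    have hk' : (1/2:ℝ)^k * (2*Real.pi) ≤ ρ₀/2 := by
      rw [← le_div_iff₀ (by positivity)]
      exact hk.le
    have hη4 : (0:ℝ) < ρ₀/4 := by positivity
    have hle := hLvle k (ρ₀/4) hη4
    have hρle : 2*(ρ₀/4) + (1/2:ℝ)^k * (2*Real.pi) ≤ ρ₀ := by linarith
    have hfin : Cs * (2*(ρ₀/4) + (1/2:ℝ)^k * (2*Real.pi)) ^ α ≤ Lv / 2 := by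
      calc Cs * (2*(ρ₀/4) + (1/2:ℝ)^k * (2*Real.pi)) ^ α
          ≤ Cs1 * ρ₀ ^ α := by
            apply mul_le_mul (by linarith)
              (Real.rpow_le_rpow (by positivity) hρle hα0.le)
              (Real.rpow_nonneg (by positivity) _) hCs1p.le
      _ = Lv / 2 := hρ₀α
    linarith
  -- integrals with respect to m
  have hintm : ∀ n, ∫ x, L^[n] ω x ∂m = ∫ x, ω x ∂m := by
    intro n
    induction n with
    | zero => rfl
    | succ n ih =>
        have : ∫ x, L^[n+1] ω x ∂m = ∫ x, Ruelle A (L^[n] ω) x ∂m := by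
          congr 1
          funext x
          rw [Function.iterate_succ_apply']
        rw [this, hfix (L^[n] ω) (contn n) ⟨M₀, (reg n).1⟩, ih]
  set I : ℝ := ∫ x, ω x ∂m with hIdef
  have hintg : ∀ n, Integrable (L^[n] ω) m := by
    intro n
    constructor
    · exact (contn n).aestronglyMeasurable
    · apply MeasureTheory.HasFiniteIntegral.of_bounded (C := M₀)
      filter_upwards with x
      rw [Real.norm_eq_abs]
      exact (reg n).1 x
  have hIbounds : ∀ n, a n ≤ I ∧ I ≤ b n := by
    intro n
    have h1 : I = ∫ x, L^[n] ω x ∂m := (hintm n).symm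
    constructor
    · rw [h1]
      calc a n = ∫ _x, a n ∂m := by simp
      _ ≤ ∫ x, L^[n] ω x ∂m :=
          integral_mono (integrable_const _) (hintg n) (ha_le n)
    · rw [h1]
      calc ∫ x, L^[n] ω x ∂m ≤ ∫ _x, b n ∂m :=
          integral_mono (hintg n) (integrable_const _) (hle_b n)
      _ = b n := by simp
  -- conclusion
  rw [Metric.tendstoUniformly_iff]
  intro ε hε
  have hΔ0' : Tendsto Δ atTop (𝓝 0) := by rwa [hLv_eq] at hΔtend
  have hev : ∀ᶠ n in atTop, Δ n < ε := by
    have := hΔ0'.eventually (gt_mem_nhds hε)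
    exact this
  filter_upwards [hev] with n hn x
  rw [Real.dist_eq]
  have h1 := ha_le n x
  have h2 := hle_b n x
  obtain ⟨h3, h4⟩ := hIbounds n
  have : |I - L^[n] ω x| ≤ Δ n := by
    rw [abs_le]
    constructor
    · simp only [hΔdef]; linarith
    · simp only [hΔdef]; linarith
  linarith
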